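/- Let G be a graph with normalized Laplacian L on L²(G), W ⊂ V(G), t > 0, ε ≥ 0 with εI + L positive definite, and let Y be the minimizer of ‖(εI+L)^{t/2} Y‖ subject to Y(w) = y_w for all w ∈ W. Then (εI+L)^t Y = Σ_{w∈W} α_w δ_w for some square-summable coefficients α_w, where δ_w is the indicator function of vertex w. Conversely any function satisfying the interpolation conditions and this equation is the minimizer. -/

import Mathlib

instance lpCLM_instCFCReal {V : Type*} :
    ContinuousFunctionalCalculus ℝ (lp (fun _ : V => ℂ) 2 →L[ℂ] lp (fun _ : V => ℂ) 2)
      IsSelfAdjoint :=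
  IsSelfAdjoint.instContinuousFunctionalCalculus


private lemma aux_inner_eq_zero {E : Type*} [NormedAddCommGroup E] [InnerProductSpace ℂ E]
    (u w : E) (h : ∀ s : ℂ, ‖u‖ ≤ ‖u + s • w‖) : (inner ℂ u w : ℂ) = 0 := by
  by_contra hp
  have hp2 : 0 < ‖(inner ℂ u w : ℂ)‖ ^ 2 := by
    have := norm_pos_iff.mpr hp
    positivity
  set p : ℂ := inner ℂ u w with hpdef
  set r : ℝ := 1 / (‖w‖ ^ 2 + 1) with hrdef
  have hr0 : 0 < r := by positivity
  set s : ℂ := -(r : ℂ) * (starRingEnd ℂ) p with hsdef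
  have key : ‖u‖ ^ 2 ≤ ‖u + s • w‖ ^ 2 := pow_le_pow_left₀ (norm_nonneg u) (h s) 2
  have h1 : (inner ℂ u (s • w) : ℂ) = ((-(r * ‖p‖ ^ 2) : ℝ) : ℂ) := by
    rw [inner_smul_right, ← hpdef, hsdef, mul_assoc, RCLike.conj_mul]
    push_cast [Complex.coe_algebraMap]
    ring
  have hs : ‖s‖ = r * ‖p‖ := by
    rw [hsdef, norm_mul, norm_neg, RCLike.norm_conj, Complex.norm_real, Real.norm_eq_abs,
      abs_of_pos hr0]
  have h2 : ‖s • w‖ ^ 2 = r ^ 2 * ‖p‖ ^ 2 * ‖w‖ ^ 2 := by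
    rw [norm_smul, hs]; ring
  rw [norm_add_sq (𝕜 := ℂ), h1, h2] at key
  have hre : RCLike.re (((-(r * ‖p‖ ^ 2) : ℝ) : ℂ)) = -(r * ‖p‖ ^ 2) := by
    rw [RCLike.re_to_complex, Complex.ofReal_re]
  rw [hre] at key
  have hr1 : r * (‖w‖ ^ 2 + 1) = 1 := by
    rw [hrdef]; field_simp
  nlinarith [hp2, hr0, norm_nonneg w, sq_nonneg ‖w‖]

set_option maxHeartbeats 1000000 in
/-- Let `G` be a connected simple graph with bounded degrees and normalized
Laplacian `L` on `ℓ²(V)`. Let `W ⊂ V`, `y ∈ ℓ²(W)`, `t > 0`, `ε ≥ 0` with `εI + L`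
positive definite, and let `Y` minimize `‖(εI+L)^{t/2} Y‖` subject to `Y(w) = y_w`, `w ∈ W`.
Then `(εI+L)^t Y = Σ_{w∈W} α_w δ_w` for some `{α_w} ∈ ℓ²(W)`; conversely any function
satisfying the interpolation conditions and an equation of this form is the minimizer. -/
theorem stmt_15 {V : Type*} [DecidableEq V] (G : SimpleGraph V) [∀ v, Fintype (G.neighborSet v)]
    (hconn : G.Connected) (D : ℕ) (hD : ∀ v, G.degree v ≤ D)
    (L : lp (fun _ : V => ℂ) 2 →L[ℂ] lp (fun _ : V => ℂ) 2) (hsa : IsSelfAdjoint L)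
    (hL : ∀ (f : lp (fun _ : V => ℂ) 2) (v : V),
      L f v = (1 / (Real.sqrt (G.degree v) : ℂ)) *
        ∑ u ∈ G.neighborFinset v,
          (f v / (Real.sqrt (G.degree v) : ℂ) - f u / (Real.sqrt (G.degree u) : ℂ)))
    (W : Set V) (y : W → ℂ) (hy : Memℓp y 2)
    (t ε : ℝ) (ht : 0 < t) (hε : 0 ≤ ε)
    (c : ℝ) (hc : 0 < c)
    (hpos : ∀ f : lp (fun _ : V => ℂ) 2,
      c * ‖f‖ ^ 2 ≤ (inner ℂ ((ε : ℂ) • f + L f) f : ℂ).re)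
    (Y : lp (fun _ : V => ℂ) 2) (hint : ∀ w : W, Y (w : V) = y w)
    (hmin : ∀ Z : lp (fun _ : V => ℂ) 2, (∀ w : W, Z (w : V) = y w) →
      ‖cfc (fun x : ℝ => (ε + x) ^ (t / 2)) L Y‖ ≤
        ‖cfc (fun x : ℝ => (ε + x) ^ (t / 2)) L Z‖) :
    (∃ α : W → ℂ, Memℓp α 2 ∧ ∀ v : V,
        cfc (fun x : ℝ => (ε + x) ^ t) L Y v =
          ∑' w : W, α w * (if v = (w : V) then 1 else 0)) ∧
    ∀ Z : lp (fun _ : V => ℂ) 2, (∀ w : W, Z (w : V) = y w) →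
      (∃ α : W → ℂ, Memℓp α 2 ∧ ∀ v : V,
        cfc (fun x : ℝ => (ε + x) ^ t) L Z v =
          ∑' w : W, α w * (if v = (w : V) then 1 else 0)) →
      ∀ Z' : lp (fun _ : V => ℂ) 2, (∀ w : W, Z' (w : V) = y w) →
        ‖cfc (fun x : ℝ => (ε + x) ^ (t / 2)) L Z‖ ≤
          ‖cfc (fun x : ℝ => (ε + x) ^ (t / 2)) L Z'‖ := by
  classical
  set A := cfc (fun x : ℝ => (ε + x) ^ (t / 2)) L with hA
  set F := cfc (fun x : ℝ => (ε + x) ^ t) L with hF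
  have hfc : Continuous (fun x : ℝ => (ε + x) ^ (t / 2)) :=
    (Real.continuous_rpow_const (by positivity)).comp (continuous_const.add continuous_id)
  -- coercivity of L
  have hpos' : ∀ g : lp (fun _ : V => ℂ) 2,
      (c - ε) * ‖g‖ ^ 2 ≤ RCLike.re (inner (𝕜 := ℂ) (L g) g) := by
    intro g
    have h0 := hpos g
    have e1 : (inner ℂ ((ε : ℂ) • g + L g) g : ℂ).re
        = ε * ‖g‖ ^ 2 + RCLike.re (inner (𝕜 := ℂ) (L g) g) := by
      rw [inner_add_left, Complex.add_re, inner_smul_left, Complex.conj_ofReal,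
        Complex.re_ofReal_mul]
      congr 2
      rw [← RCLike.re_to_complex]
      exact inner_self_eq_norm_sq (𝕜 := ℂ) g
    rw [e1] at h0
    linarith
  -- spectrum bound
  have hspec : ∀ x ∈ spectrum ℝ L, 0 < ε + x := by
    intro x hx
    have hsa1 : IsSelfAdjoint
        (algebraMap ℝ (lp (fun _ : V => ℂ) 2 →L[ℂ] lp (fun _ : V => ℂ) 2) (c - ε)) := by
      rw [Algebra.algebraMap_eq_smul_one, RCLike.real_smul_eq_coe_smul (K := ℂ)]
      exact (show IsSelfAdjoint ((c - ε : ℝ) : ℂ) from Complex.conj_ofReal _).smul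
        (IsSelfAdjoint.one _)
    have hM : (0 : lp (fun _ : V => ℂ) 2 →L[ℂ] lp (fun _ : V => ℂ) 2)
        ≤ L - algebraMap ℝ _ (c - ε) := by
      rw [ContinuousLinearMap.nonneg_iff_isPositive]
      refine ⟨ContinuousLinearMap.isSelfAdjoint_iff_isSymmetric.mp (hsa.sub hsa1), ?_⟩
      intro g
      rw [ContinuousLinearMap.reApplyInnerSelf_apply, ContinuousLinearMap.sub_apply,
        Algebra.algebraMap_eq_smul_one, ContinuousLinearMap.smul_apply,
        ContinuousLinearMap.one_apply, RCLike.real_smul_eq_coe_smul (K := ℂ),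
        inner_sub_left, map_sub, inner_smul_real_left, RCLike.smul_re,
        inner_self_eq_norm_sq]
      linarith [hpos' g]
    have hmem : x - (c - ε) ∈ spectrum ℝ (L - algebraMap ℝ _ (c - ε)) := by
      rw [← spectrum.sub_singleton_eq]
      exact Set.sub_mem_sub hx rfl
    have := spectrum_nonneg_of_nonneg hM hmem
    linarith
  -- A is self-adjoint
  have hAsa : IsSelfAdjoint A := cfc_predicate _ L
  have hAsym := ContinuousLinearMap.isSelfAdjoint_iff_isSymmetric.mp hAsa
  -- A * A = F
  have hmulA : A * A = F := by
    rw [hA, hF, ← cfc_mul (fun x : ℝ => (ε + x) ^ (t / 2)) (fun x : ℝ => (ε + x) ^ (t / 2)) L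
      hfc.continuousOn hfc.continuousOn]
    apply cfc_congr
    intro x hx
    have h1 : 0 < ε + x := hspec x hx
    simp only
    rw [← Real.rpow_add h1, add_halves]
  -- support of F Y
  have hsupp : ∀ v : V, v ∉ W → F Y v = 0 := by
    intro v hv
    set g : lp (fun _ : V => ℂ) 2 := lp.single 2 v (1 : ℂ) with hg
    have hg0 : ∀ w : W, g (w : V) = 0 := by
      intro w
      refine lp.single_apply_ne 2 v _ (fun hvw => hv ?_)
      rw [← hvw]
      exact w.2
    have horth : (inner ℂ (A Y) (A g) : ℂ) = 0 := by
      apply aux_inner_eq_zero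
      intro s
      have hZ : ∀ w : W, (Y + s • g) (w : V) = y w := by
        intro w
        have : (Y + s • g) (w : V) = Y (w : V) + s • g (w : V) := by
          rw [lp.coeFn_add, Pi.add_apply, lp.coeFn_smul, Pi.smul_apply]
        rw [this, hg0 w, hint w, smul_zero, add_zero]
      have h3 := hmin (Y + s • g) hZ
      rwa [map_add, map_smul] at h3
    have h4 : (inner ℂ (F Y) g : ℂ) = 0 := by
      calc (inner ℂ (F Y) g : ℂ) = inner ℂ (A (A Y)) g := by
            rw [← hmulA, ContinuousLinearMap.mul_apply]
        _ = inner ℂ (A Y) (A g) := hAsym (A Y) g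
        _ = 0 := horth
    rw [hg, lp.inner_single_right] at h4
    simpa [RCLike.inner_apply] using h4
  constructor
  · refine ⟨fun w => F Y (w : V), ?_, ?_⟩
    · apply memℓp_gen
      have h2 : (0 : ℝ) < (2 : ENNReal).toReal := by norm_num
      exact ((lp.memℓp (F Y)).summable h2).subtype _
    · intro v
      by_cases hv : v ∈ W
      · rw [tsum_eq_single (⟨v, hv⟩ : W)]
        · simp
        · intro w hw
          have hne : ¬(v = (w : V)) := by
            intro hvw
            exact hw (Subtype.ext hvw.symm)
          simp [hne]
      · rw [hsupp v hv]
        symm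
        convert tsum_zero with w
        have hne : ¬(v = (w : V)) := fun hvw => hv (hvw ▸ w.2)
        simp [hne]
  · rintro Z hZint ⟨α, hα, hαeq⟩ Z' hZ'int
    have hZsupp : ∀ v : V, v ∉ W → F Z v = 0 := by
      intro v hv
      rw [hαeq v]
      convert tsum_zero with w
      have hne : ¬(v = (w : V)) := fun hvw => hv (hvw ▸ w.2)
      simp [hne]
    set g : lp (fun _ : V => ℂ) 2 := Z' - Z with hg
    have hg0 : ∀ w : W, g (w : V) = 0 := by
      intro w
      have : g (w : V) = Z' (w : V) - Z (w : V) := by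
        rw [hg, lp.coeFn_sub, Pi.sub_apply]
      rw [this, hZint w, hZ'int w, sub_self]
    have horth : (inner ℂ (A Z) (A g) : ℂ) = 0 := by
      have h1 : (inner ℂ (F Z) g : ℂ) = 0 := by
        rw [lp.inner_eq_tsum]
        convert tsum_zero with v
        by_cases hv : v ∈ W
        · rw [hg0 ⟨v, hv⟩]
          simp
        · rw [hZsupp v hv]
          simp
      calc (inner ℂ (A Z) (A g) : ℂ) = inner ℂ (A (A Z)) g := (hAsym (A Z) g).symm
        _ = inner ℂ (F Z) g := by rw [← ContinuousLinearMap.mul_apply, hmulA]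
        _ = 0 := h1
    have hZ'eq : A Z' = A Z + A g := by
      rw [← map_add]
      congr 1
      rw [hg]
      abel
    have hnorm : ‖A Z‖ ^ 2 ≤ ‖A Z'‖ ^ 2 := by
      rw [hZ'eq, norm_add_sq (𝕜 := ℂ), horth]
      have : RCLike.re (0 : ℂ) = 0 := map_zero _
      rw [this]
      nlinarith [sq_nonneg ‖A g‖]
    nlinarith [norm_nonneg (A Z), norm_nonneg (A Z')]
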